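/- The fixed-point subalgebra of sl2-hat under the Chevalley involution θ̂ (given by θ̂(t^n⊗x) = t^{−n}⊗θ(x), θ̂(c) = −c, θ̂(d) = −d, where θ is the Chevalley involution of sl2 with θ(e)=−f, θ(f)=−e, θ(h)=−h) has vector space basis {A_n = 2i(t^n⊗e − t^{−n}⊗f) : n ∈ Z} ∪ {G_n = t^n⊗h − t^{−n}⊗h : n ∈ N}. -/

import Mathlib

structure AffineSl2 (L : Type*) [LieRing L] [LieAlgebra ℂ L] where
  E : ℤ → L
  F : ℤ → L
  H : ℤ → L
  c : L
  d : L
  lie_EF : ∀ m n : ℤ, ⁅E m, F n⁆ = H (m + n) + (if m = -n then (m : ℂ) else 0) • c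
  lie_HE : ∀ m n : ℤ, ⁅H m, E n⁆ = (2 : ℂ) • E (m + n)
  lie_HF : ∀ m n : ℤ, ⁅H m, F n⁆ = (-2 : ℂ) • F (m + n)
  lie_EE : ∀ m n : ℤ, ⁅E m, E n⁆ = 0
  lie_FF : ∀ m n : ℤ, ⁅F m, F n⁆ = 0
  lie_HH : ∀ m n : ℤ, ⁅H m, H n⁆ = (if m = -n then (2 * m : ℂ) else 0) • c
  lie_dE : ∀ n : ℤ, ⁅d, E n⁆ = (n : ℂ) • E n
  lie_dF : ∀ n : ℤ, ⁅d, F n⁆ = (n : ℂ) • F n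
  lie_dH : ∀ n : ℤ, ⁅d, H n⁆ = (n : ℂ) • H n
  lie_cx : ∀ x : L, ⁅c, x⁆ = 0


/-- The fixed-point subalgebra of `sl2`-hat under the Chevalley involution `θ̂`
(with `θ̂(tⁿ⊗e) = -t⁻ⁿ⊗f`, `θ̂(tⁿ⊗f) = -t⁻ⁿ⊗e`, `θ̂(tⁿ⊗h) = -t⁻ⁿ⊗h`,
`θ̂(c) = -c`, `θ̂(d) = -d`) has vector space basis
`{Aₙ = 2i(tⁿ⊗e − t⁻ⁿ⊗f) : n ∈ ℤ} ∪ {Gₙ = tⁿ⊗h − t⁻ⁿ⊗h : n ∈ ℕ, n ≥ 1}`: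
this family is linearly independent and spans the set of `θ̂`-fixed points. -/
theorem chevalley_fixed_points_basis {L : Type*} [LieRing L] [LieAlgebra ℂ L]
    (𝔄 : AffineSl2 L)
    (b : Module.Basis ((ℤ × Fin 3) ⊕ Fin 2) ℂ L)
    (hbE : ∀ n : ℤ, b (Sum.inl (n, 0)) = 𝔄.E n)
    (hbF : ∀ n : ℤ, b (Sum.inl (n, 1)) = 𝔄.F n)
    (hbH : ∀ n : ℤ, b (Sum.inl (n, 2)) = 𝔄.H n)
    (hbc : b (Sum.inr 0) = 𝔄.c) (hbd : b (Sum.inr 1) = 𝔄.d)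
    (θ : L →ₗ[ℂ] L)
    (hθE : ∀ n : ℤ, θ (𝔄.E n) = -𝔄.F (-n))
    (hθF : ∀ n : ℤ, θ (𝔄.F n) = -𝔄.E (-n))
    (hθH : ∀ n : ℤ, θ (𝔄.H n) = -𝔄.H (-n))
    (hθc : θ 𝔄.c = -𝔄.c) (hθd : θ 𝔄.d = -𝔄.d)
    (v : ℤ ⊕ {n : ℕ // 0 < n} → L)
    (hvA : ∀ n : ℤ, v (Sum.inl n) = (2 * Complex.I) • (𝔄.E n - 𝔄.F (-n)))
    (hvG : ∀ n : {n : ℕ // 0 < n}, v (Sum.inr n) = 𝔄.H (n : ℤ) - 𝔄.H (-(n : ℤ))) :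
    LinearIndependent ℂ v ∧
      (∀ x : L, θ x = x ↔ x ∈ Submodule.span ℂ (Set.range v)) := by
  have hI : (2 * Complex.I : ℂ) ≠ 0 := by simp [Complex.I_ne_zero]
  constructor
  · rw [linearIndependent_iff']
    intro s f hsum j hj
    cases j with
    | inl n =>
      set φ : L →ₗ[ℂ] ℂ :=
        (Finsupp.lapply (Sum.inl (n, 0) : (ℤ × Fin 3) ⊕ Fin 2)) ∘ₗ (b.repr : L →ₗ[ℂ] _) with hφdef
      have hφ : ∀ i, φ (v i) = if i = Sum.inl n then 2 * Complex.I else 0 := by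
        rintro (m | m)
        · rw [hvA m, ← hbE, ← hbF]
          simp [hφdef, Module.Basis.repr_self, Finsupp.single_apply]
        · rw [hvG m, ← hbH, ← hbH]
          simp [hφdef, Module.Basis.repr_self, Finsupp.single_apply]
      have h2 : ∑ i ∈ s, f i * φ (v i) = 0 := by
        have := congrArg φ hsum
        simpa [map_sum, map_smul, smul_eq_mul] using this
      simp only [hφ, mul_ite, mul_zero, Finset.sum_ite_eq' s, hj, if_true] at h2
      exact (mul_eq_zero.mp h2).resolve_right hI
    | inr n =>
      set φ : L →ₗ[ℂ] ℂ :=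
        (Finsupp.lapply (Sum.inl ((n : ℤ), 2) : (ℤ × Fin 3) ⊕ Fin 2)) ∘ₗ (b.repr : L →ₗ[ℂ] _)
        with hφdef
      have hφ : ∀ i, φ (v i) = if i = Sum.inr n then 1 else 0 := by
        rintro (m | m)
        · rw [hvA m, ← hbE, ← hbF]
          simp [hφdef, Module.Basis.repr_self, Finsupp.single_apply]
        · rw [hvG m, ← hbH, ← hbH]
          have h1 : ¬ (-(m : ℤ) = (n : ℤ)) := by
            have := m.2; have := n.2; omega
          have h2 : ((m : ℤ) = (n : ℤ)) ↔ m = n := by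
            constructor
            · intro h; exact Subtype.ext (by exact_mod_cast h)
            · intro h; rw [h]
          simp [hφdef, Module.Basis.repr_self, Finsupp.single_apply, h1, h2]
      have h2 : ∑ i ∈ s, f i * φ (v i) = 0 := by
        have := congrArg φ hsum
        simpa [map_sum, map_smul, smul_eq_mul] using this
      simp only [hφ, mul_ite, mul_zero, mul_one, Finset.sum_ite_eq' s, hj, if_true] at h2
      exact h2
  · have hmem : ∀ i, b i + θ (b i) ∈ Submodule.span ℂ (Set.range v) := by
      rintro (⟨m, k⟩ | k)
      · fin_cases k
        · show b (Sum.inl (m, 0)) + θ (b (Sum.inl (m, 0))) ∈ _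
          rw [hbE, hθE]
          have hv : 𝔄.E m + -𝔄.F (-m) = (2 * Complex.I)⁻¹ • v (Sum.inl m) := by
            rw [hvA, smul_smul, inv_mul_cancel₀ hI, one_smul, sub_eq_add_neg]
          rw [hv]
          exact Submodule.smul_mem _ _ (Submodule.subset_span ⟨Sum.inl m, rfl⟩)
        · show b (Sum.inl (m, 1)) + θ (b (Sum.inl (m, 1))) ∈ _
          rw [hbF, hθF]
          have hv : 𝔄.F m + -𝔄.E (-m) = -((2 * Complex.I)⁻¹ • v (Sum.inl (-m))) := by
            rw [hvA, smul_smul, inv_mul_cancel₀ hI, one_smul, neg_neg]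
            abel
          rw [hv]
          exact Submodule.neg_mem _
            (Submodule.smul_mem _ _ (Submodule.subset_span ⟨Sum.inl (-m), rfl⟩))
        · show b (Sum.inl (m, 2)) + θ (b (Sum.inl (m, 2))) ∈ _
          rw [hbH, hθH]
          rcases lt_trichotomy m 0 with hm | hm | hm
          · have hv : 𝔄.H m + -𝔄.H (-m) = -v (Sum.inr ⟨(-m).toNat, by omega⟩) := by
              rw [hvG]
              have : (((-m).toNat : ℤ)) = -m := Int.toNat_of_nonneg (by omega)
              rw [this, neg_neg]
              abel
            rw [hv]
            exact Submodule.neg_mem _ (Submodule.subset_span ⟨_, rfl⟩)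
          · subst hm
            simp only [neg_zero, add_neg_cancel]
            exact Submodule.zero_mem _
          · have hv : 𝔄.H m + -𝔄.H (-m) = v (Sum.inr ⟨m.toNat, by omega⟩) := by
              rw [hvG]
              have : ((m.toNat : ℤ)) = m := Int.toNat_of_nonneg (by omega)
              rw [this]
              abel
            rw [hv]
            exact Submodule.subset_span ⟨_, rfl⟩
      · fin_cases k
        · show b (Sum.inr 0) + θ (b (Sum.inr 0)) ∈ _
          rw [hbc, hθc]
          simp only [add_neg_cancel]
          exact Submodule.zero_mem _
        · show b (Sum.inr 1) + θ (b (Sum.inr 1)) ∈ _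
          rw [hbd, hθd]
          simp only [add_neg_cancel]
          exact Submodule.zero_mem _
    have hall : ∀ y : L, y + θ y ∈ Submodule.span ℂ (Set.range v) := by
      intro y
      have hT : Submodule.span ℂ (Set.range ⇑b) ≤
          Submodule.comap (LinearMap.id + θ) (Submodule.span ℂ (Set.range v)) := by
        rw [Submodule.span_le]
        rintro _ ⟨i, rfl⟩
        simpa using hmem i
      have := hT (show y ∈ Submodule.span ℂ (Set.range ⇑b) by rw [b.span_eq]; trivial)
      simpa using this
    intro x
    constructor
    · intro hx
      have : x = (2 : ℂ)⁻¹ • (x + θ x) := by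
        rw [hx, ← two_smul ℂ x, smul_smul, inv_mul_cancel₀ (two_ne_zero), one_smul]
      rw [this]
      exact Submodule.smul_mem _ _ (hall x)
    · intro hx
      have hle : Submodule.span ℂ (Set.range v) ≤ LinearMap.eqLocus θ LinearMap.id := by
        rw [Submodule.span_le]
        rintro _ ⟨i, rfl⟩
        rcases i with n | n
        · show θ (v (Sum.inl n)) = v (Sum.inl n)
          rw [hvA, map_smul, map_sub, hθE, hθF, neg_neg, sub_neg_eq_add, add_comm,
            ← sub_eq_add_neg]
        · show θ (v (Sum.inr n)) = v (Sum.inr n)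
          rw [hvG, map_sub, hθH, hθH, neg_neg]
          abel
      exact hle hx
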